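/- Relative bound of the Jaynes-Cummings interaction by the photon number operator: for every 0 < b < 1 there exists c > 0 such that for all states ψ in the finite-excitation span of the M-cavity system, ‖H_I ψ‖ ≤ b‖H_P ψ‖ + c‖ψ‖, where H_P = ∑_i ω^P_i a*_i a_i with all ω^P_i > 0 and H_I = ∑_i ω^I_i (a*_i σ⁻_i + a_i σ⁺_i). -/

import Mathlib

/-! The `M`-cavity JCH system on the finite-excitation span `D`, modeled as finitely
supported functions on the basis index set `(Fin M → ℕ) × (Fin M → Bool)`
(photon numbers `m_i` and atomic bits `b_i`), with the ℓ²-norm on coefficients. -/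

noncomputable section

/-- Finite-excitation span of the `M`-cavity system. -/
abbrev CavSpan (M : ℕ) : Type := ((Fin M → ℕ) × (Fin M → Bool)) →₀ ℂ

/-- Photon annihilation operator `a_i` in cavity `i`. -/
def ann (M : ℕ) (i : Fin M) : Module.End ℂ (CavSpan M) :=
  Finsupp.lsum ℂ fun p =>
    (Real.sqrt (p.1 i) : ℂ) •
      Finsupp.lsingle (Function.update p.1 i (p.1 i - 1), p.2)

/-- Photon creation operator `a*_i` in cavity `i`. -/
def cre (M : ℕ) (i : Fin M) : Module.End ℂ (CavSpan M) :=
  Finsupp.lsum ℂ fun p =>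
    (Real.sqrt (p.1 i + 1) : ℂ) •
      Finsupp.lsingle (Function.update p.1 i (p.1 i + 1), p.2)

/-- Atomic raising operator `σ⁺_i` in cavity `i`. -/
def sigmaPlus (M : ℕ) (i : Fin M) : Module.End ℂ (CavSpan M) :=
  Finsupp.lsum ℂ fun p =>
    if p.2 i then 0 else Finsupp.lsingle (p.1, Function.update p.2 i true)

/-- Atomic lowering operator `σ⁻_i` in cavity `i`. -/
def sigmaMinus (M : ℕ) (i : Fin M) : Module.End ℂ (CavSpan M) :=
  Finsupp.lsum ℂ fun p =>
    if p.2 i then Finsupp.lsingle (p.1, Function.update p.2 i false) else 0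

/-- Free photon Hamiltonian `H_P = ∑_i ω^P_i a*_i a_i`. -/
def HP (M : ℕ) (ωP : Fin M → ℝ) : Module.End ℂ (CavSpan M) :=
  ∑ i, (ωP i : ℂ) • (cre M i * ann M i)

/-- Atom-photon interaction `H_I = ∑_i ω^I_i (a*_i σ⁻_i + a_i σ⁺_i)`. -/
def HI (M : ℕ) (ωI : Fin M → ℝ) : Module.End ℂ (CavSpan M) :=
  ∑ i, (ωI i : ℂ) • (cre M i * sigmaMinus M i + ann M i * sigmaPlus M i)

/-- The ℓ²-norm of a vector of the finite-excitation span. -/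
def nrm {M : ℕ} (ψ : CavSpan M) : ℝ :=
  Real.sqrt (∑ x ∈ ψ.support, ‖ψ x‖ ^ 2)

namespace JCaux

variable {M : ℕ}

abbrev Idx (M : ℕ) := (Fin M → ℕ) × (Fin M → Bool)

lemma nrm_eq (ψ : CavSpan M) (s : Finset (Idx M)) (h : ψ.support ⊆ s) :
    nrm ψ = Real.sqrt (∑ x ∈ s, ‖ψ x‖ ^ 2) := by
  unfold nrm
  rw [Finset.sum_subset h]
  intro x _ hx
  rw [Finsupp.notMem_support_iff.mp hx]
  simp

lemma nrm_nonneg (ψ : CavSpan M) : 0 ≤ nrm ψ := Real.sqrt_nonneg _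

def restr (s : Finset (Idx M)) (ψ : CavSpan M) : EuclideanSpace ℂ s := WithLp.toLp 2 (fun x => ψ x)

lemma nrm_eq_norm (ψ : CavSpan M) (s : Finset (Idx M)) (h : ψ.support ⊆ s) :
    nrm ψ = ‖restr s ψ‖ := by
  rw [nrm_eq ψ s h, EuclideanSpace.norm_eq, ← Finset.sum_coe_sort s (fun x => ‖ψ x‖ ^ 2)]
  rfl

lemma nrm_add_le (f g : CavSpan M) : nrm (f + g) ≤ nrm f + nrm g := by
  set s := f.support ∪ g.support with hs
  have hf : f.support ⊆ s := Finset.subset_union_left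
  have hg : g.support ⊆ s := Finset.subset_union_right
  have hfg : (f + g).support ⊆ s := Finsupp.support_add
  rw [nrm_eq_norm f s hf, nrm_eq_norm g s hg, nrm_eq_norm (f + g) s hfg]
  have : restr s (f + g) = restr s f + restr s g := by
    ext x; simp [restr, Finsupp.add_apply]
  rw [this]
  exact norm_add_le _ _

lemma nrm_smul (c : ℂ) (f : CavSpan M) : nrm (c • f) = ‖c‖ * nrm f := by
  have h : (c • f).support ⊆ f.support := Finsupp.support_smul
  rw [nrm_eq_norm f f.support subset_rfl, nrm_eq_norm (c • f) f.support h]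
  have : restr f.support (c • f) = c • restr f.support f := by
    ext x; simp [restr, Finsupp.smul_apply]
  rw [this, norm_smul]

lemma nrm_zero : nrm (0 : CavSpan M) = 0 := by simp [nrm]

lemma nrm_sum_le {ι : Type*} (t : Finset ι) (f : ι → CavSpan M) :
    nrm (∑ i ∈ t, f i) ≤ ∑ i ∈ t, nrm (f i) := by
  classical
  induction t using Finset.induction_on with
  | empty => simp [nrm_zero]
  | insert _ _ hx ih =>
    rw [Finset.sum_insert hx, Finset.sum_insert hx]
    exact (nrm_add_le _ _).trans (by linarith)


/-- Pointwise multiplication of a finsupp by a real weight. -/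
def wmul (w : Idx M → ℝ) (ψ : CavSpan M) : CavSpan M :=
  Finsupp.onFinset ψ.support (fun p => (w p : ℂ) * ψ p)
    (fun p hp => Finsupp.mem_support_iff.mpr (right_ne_zero_of_mul hp))

lemma wmul_apply (w : Idx M → ℝ) (ψ : CavSpan M) (p : Idx M) :
    wmul w ψ p = (w p : ℂ) * ψ p := rfl

lemma wmul_support (w : Idx M → ℝ) (ψ : CavSpan M) :
    (wmul w ψ).support ⊆ ψ.support := Finsupp.support_onFinset_subset

lemma shift_apply (w : Idx M → ℝ) (σ : Idx M → Idx M) (ψ : CavSpan M) :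
    (Finsupp.lsum ℂ (fun p => (w p : ℂ) • Finsupp.lsingle (σ p)) : Module.End ℂ (CavSpan M)) ψ
      = Finsupp.mapDomain σ (wmul w ψ) := by
  rw [Finsupp.lsum_apply, Finsupp.mapDomain, Finsupp.sum, Finsupp.sum,
    Finset.sum_subset (wmul_support w ψ)]
  · refine Finset.sum_congr rfl fun p _ => ?_
    rw [wmul_apply]
    simp [Finsupp.smul_single']
  · intro p _ hp
    rw [Finsupp.notMem_support_iff.mp hp, Finsupp.single_zero]

lemma nrm_shift (w : Idx M → ℝ) (σ : Idx M → Idx M)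
    (hinj : ∀ p q, w p ≠ 0 → w q ≠ 0 → σ p = σ q → p = q) (ψ : CavSpan M) :
    nrm ((Finsupp.lsum ℂ (fun p => (w p : ℂ) • Finsupp.lsingle (σ p)) : Module.End ℂ (CavSpan M)) ψ)
      = Real.sqrt (∑ p ∈ ψ.support, (w p) ^ 2 * ‖ψ p‖ ^ 2) := by
  classical
  rw [shift_apply]
  set φ := wmul w ψ with hφ
  have hwsupp : ∀ p ∈ φ.support, w p ≠ 0 := by
    intro p hp h0
    exact Finsupp.mem_support_iff.mp hp (by rw [hφ, wmul_apply, h0]; simp)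
  have hinj' : Set.InjOn σ ↑φ.support := fun p hp q hq h =>
    hinj p q (hwsupp p hp) (hwsupp q hq) h
  have hsupp := Finsupp.mapDomain_support_of_injOn φ hinj'
  rw [nrm_eq _ (φ.support.image σ) (by rw [hsupp])]
  congr 1
  rw [Finset.sum_image (fun p hp q hq h => hinj p q (hwsupp p hp) (hwsupp q hq) h)]
  have hcong : ∑ p ∈ φ.support, ‖(Finsupp.mapDomain σ φ) (σ p)‖ ^ 2
      = ∑ p ∈ φ.support, w p ^ 2 * ‖ψ p‖ ^ 2 := by
    refine Finset.sum_congr rfl fun p hp => ?_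
    rw [Finsupp.mapDomain_apply' ↑φ.support φ subset_rfl hinj' (Finset.mem_coe.mpr hp),
      hφ, wmul_apply]
    simp [mul_pow, Complex.norm_real, sq_abs]
  rw [hcong]
  refine Finset.sum_subset (wmul_support w ψ) ?_
  intro p hp hnp
  have h0 : (w p : ℂ) * ψ p = 0 := by
    have := Finsupp.notMem_support_iff.mp hnp; rwa [wmul_apply] at this
  have hψ : ψ p ≠ 0 := Finsupp.mem_support_iff.mp hp
  have hwc : (w p : ℂ) = 0 := by
    rcases mul_eq_zero.mp h0 with h | h
    · exact h
    · exact absurd h hψ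
  have hw0 : w p = 0 := by exact_mod_cast hwc
  simp [hw0]


/-! ### The interaction terms and the free Hamiltonian as weighted shifts -/

def w1 (i : Fin M) (p : Idx M) : ℝ := if p.2 i then Real.sqrt (p.1 i + 1) else 0
def σ1 (i : Fin M) (p : Idx M) : Idx M :=
  (Function.update p.1 i (p.1 i + 1), Function.update p.2 i false)
def w2 (i : Fin M) (p : Idx M) : ℝ := if p.2 i then 0 else Real.sqrt (p.1 i)
def σ2 (i : Fin M) (p : Idx M) : Idx M :=
  (Function.update p.1 i (p.1 i - 1), Function.update p.2 i true)

lemma t1_eq (i : Fin M) :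
    cre M i * sigmaMinus M i
      = (Finsupp.lsum ℂ (fun p => (w1 i p : ℂ) • Finsupp.lsingle (σ1 i p)) :
          Module.End ℂ (CavSpan M)) := by
  refine Finsupp.lhom_ext fun p c => ?_
  by_cases h : p.2 i <;>
    simp [Module.End.mul_apply, cre, sigmaMinus, Finsupp.lsum_single, h, w1, σ1]

lemma t2_eq (i : Fin M) :
    ann M i * sigmaPlus M i
      = (Finsupp.lsum ℂ (fun p => (w2 i p : ℂ) • Finsupp.lsingle (σ2 i p)) :
          Module.End ℂ (CavSpan M)) := by
  refine Finsupp.lhom_ext fun p c => ?_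
  by_cases h : p.2 i <;>
    simp [Module.End.mul_apply, ann, sigmaPlus, Finsupp.lsum_single, h, w2, σ2]

lemma creann_single (i : Fin M) (p : Idx M) (c : ℂ) :
    (cre M i * ann M i) (Finsupp.single p c)
      = ((p.1 i : ℝ) : ℂ) • Finsupp.single p c := by
  rcases Nat.eq_zero_or_pos (p.1 i) with h | h
  · simp [Module.End.mul_apply, ann, cre, Finsupp.lsum_single, h]
  · have h1 : p.1 i - 1 + 1 = p.1 i := Nat.succ_pred_eq_of_pos h
    have h2 : ((p.1 i - 1 : ℕ) : ℝ) + 1 = ((p.1 i : ℕ) : ℝ) := by exact_mod_cast h1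
    simp only [Module.End.mul_apply, ann, cre, Finsupp.lsum_single, LinearMap.smul_apply,
      Finsupp.lsingle_apply, map_smul, Function.update_self, Function.update_idem, h1,
      Function.update_eq_self, smul_smul]
    rw [h2, ← Complex.ofReal_mul, Real.mul_self_sqrt (by positivity)]

def EP (ωP : Fin M → ℝ) (p : Idx M) : ℝ := ∑ i, ωP i * (p.1 i : ℝ)

lemma HP_eq (ωP : Fin M → ℝ) :
    HP M ωP = (Finsupp.lsum ℂ (fun p => (EP ωP p : ℂ) • Finsupp.lsingle (id p)) :
      Module.End ℂ (CavSpan M)) := by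
  refine Finsupp.lhom_ext fun p c => ?_
  simp only [HP, LinearMap.sum_apply, LinearMap.smul_apply, Finsupp.lsum_single, id_eq, EP,
    Finsupp.lsingle_apply]
  rw [Finset.sum_congr rfl (fun x _ => by
        rw [creann_single, smul_smul, ← Complex.ofReal_mul]),
      ← Finset.sum_smul, ← Complex.ofReal_sum]

lemma σ1_inj (i : Fin M) (p q : Idx M) (hp : w1 i p ≠ 0) (hq : w1 i q ≠ 0)
    (h : σ1 i p = σ1 i q) : p = q := by
  have hp2 : p.2 i := by by_contra hb; simp [w1, hb] at hp
  have hq2 : q.2 i := by by_contra hb; simp [w1, hb] at hq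
  have h1 := congrArg Prod.fst h
  have h2 := congrArg Prod.snd h
  simp only [σ1] at h1 h2
  have e1 : p.1 = q.1 := by
    funext j
    by_cases hj : j = i
    · subst hj
      have := congrFun h1 j
      simpa using this
    · have := congrFun h1 j
      simpa [Function.update_of_ne hj] using this
  have e2 : p.2 = q.2 := by
    funext j
    by_cases hj : j = i
    · subst hj; rw [hp2, hq2]
    · have := congrFun h2 j
      simpa [Function.update_of_ne hj] using this
  exact Prod.ext e1 e2

lemma σ2_inj (i : Fin M) (p q : Idx M) (hp : w2 i p ≠ 0) (hq : w2 i q ≠ 0)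
    (h : σ2 i p = σ2 i q) : p = q := by
  have hp2 : p.2 i = false := by
    by_contra hb
    have hb' : p.2 i = true := by simpa using hb
    simp [w2, hb'] at hp
  have hq2 : q.2 i = false := by
    by_contra hb
    have hb' : q.2 i = true := by simpa using hb
    simp [w2, hb'] at hq
  have hp1 : p.1 i ≠ 0 := by
    intro h0; simp [w2, hp2, h0] at hp
  have hq1 : q.1 i ≠ 0 := by
    intro h0; simp [w2, hq2, h0] at hq
  have h1 := congrArg Prod.fst h
  have h2 := congrArg Prod.snd h
  simp only [σ2] at h1 h2
  have e1 : p.1 = q.1 := by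
    funext j
    by_cases hj : j = i
    · subst hj
      have := congrFun h1 j
      simp only [Function.update_self] at this
      omega
    · have := congrFun h1 j
      simpa [Function.update_of_ne hj] using this
  have e2 : p.2 = q.2 := by
    funext j
    by_cases hj : j = i
    · subst hj; rw [hp2, hq2]
    · have := congrFun h2 j
      simpa [Function.update_of_ne hj] using this
  exact Prod.ext e1 e2

lemma nrm_t1 (i : Fin M) (ψ : CavSpan M) :
    nrm ((cre M i * sigmaMinus M i) ψ)
      = Real.sqrt (∑ p ∈ ψ.support, (w1 i p) ^ 2 * ‖ψ p‖ ^ 2) := by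
  rw [t1_eq]; exact nrm_shift _ _ (σ1_inj i) ψ

lemma nrm_t2 (i : Fin M) (ψ : CavSpan M) :
    nrm ((ann M i * sigmaPlus M i) ψ)
      = Real.sqrt (∑ p ∈ ψ.support, (w2 i p) ^ 2 * ‖ψ p‖ ^ 2) := by
  rw [t2_eq]; exact nrm_shift _ _ (σ2_inj i) ψ

lemma nrm_HP (ωP : Fin M → ℝ) (ψ : CavSpan M) :
    nrm (HP M ωP ψ)
      = Real.sqrt (∑ p ∈ ψ.support, (EP ωP p) ^ 2 * ‖ψ p‖ ^ 2) := by
  rw [HP_eq]; exact nrm_shift _ id (fun p q _ _ h => h) ψ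

lemma sqrt_add_le' (x y : ℝ) (hx : 0 ≤ x) (hy : 0 ≤ y) :
    Real.sqrt (x + y) ≤ Real.sqrt x + Real.sqrt y := by
  have h1 : Real.sqrt (x + y) ≤ Real.sqrt ((Real.sqrt x + Real.sqrt y) ^ 2) := by
    refine Real.sqrt_le_sqrt ?_
    nlinarith [Real.sq_sqrt hx, Real.sq_sqrt hy, Real.sqrt_nonneg x, Real.sqrt_nonneg y]
  rwa [Real.sqrt_sq (by positivity)] at h1

end JCaux

open JCaux

set_option maxHeartbeats 1600000 in
/-- Relative bound of the Jaynes-Cummings interaction by the photon number operator: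
for every `0 < b < 1` there exists `c > 0` such that for all `ψ` in the
finite-excitation span, `‖H_I ψ‖ ≤ b ‖H_P ψ‖ + c ‖ψ‖`. -/
theorem stmt13 (M : ℕ) (hM : 1 ≤ M) (ωP ωI : Fin M → ℝ)
    (hωP : ∀ i, 0 < ωP i) (hωI : ∀ i, 0 < ωI i)
    (b : ℝ) (hb0 : 0 < b) (hb1 : b < 1) :
    ∃ c > 0, ∀ ψ : CavSpan M,
      nrm (HI M ωI ψ) ≤ b * nrm (HP M ωP ψ) + c * nrm ψ := by
  classical
  have hne : Nonempty (Fin M) := Fin.pos_iff_nonempty.mp hM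
  set μ := Finset.univ.inf' Finset.univ_nonempty ωP with hμdef
  have hμpos : 0 < μ := (Finset.lt_inf'_iff _).mpr (fun i _ => hωP i)
  have hμle : ∀ i, μ ≤ ωP i := fun i => Finset.inf'_le _ (Finset.mem_univ i)
  set Λ := ∑ i, 2 * ωI i with hΛdef
  have hΛpos : 0 < Λ :=
    Finset.sum_pos (fun i _ => by linarith [hωI i]) Finset.univ_nonempty
  set ε := b * μ / Λ with hεdef
  have hεpos : 0 < ε := by positivity
  set C := 1 + 1 / (4 * ε ^ 2) with hCdef
  have hCpos : 0 < C := by positivity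
  refine ⟨Λ * Real.sqrt C, by positivity, fun ψ => ?_⟩
  set Np : JCaux.Idx M → ℝ := fun p => ∑ i, (p.1 i : ℝ) with hNpdef
  have hNnonneg : ∀ p, 0 ≤ Np p := fun p => Finset.sum_nonneg fun i _ => Nat.cast_nonneg _
  set S2 := ∑ p ∈ ψ.support, (Np p) ^ 2 * ‖ψ p‖ ^ 2 with hS2def
  have hS2nonneg : 0 ≤ S2 := Finset.sum_nonneg fun p _ => by positivity
  set R2 := ∑ p ∈ ψ.support, (Np p + 1) * ‖ψ p‖ ^ 2 with hR2def
  have hR2nonneg : 0 ≤ R2 := Finset.sum_nonneg fun p _ => by positivity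
  have hnψ : nrm ψ = Real.sqrt (∑ p ∈ ψ.support, ‖ψ p‖ ^ 2) := rfl
  have hsqsum : 0 ≤ ∑ p ∈ ψ.support, ‖ψ p‖ ^ 2 :=
    Finset.sum_nonneg fun p _ => by positivity
  -- pointwise bounds on the weights
  have hw1 : ∀ (i : Fin M) (p : JCaux.Idx M), (JCaux.w1 i p) ^ 2 ≤ Np p + 1 := by
    intro i p
    have hle : (p.1 i : ℝ) ≤ Np p :=
      Finset.single_le_sum (f := fun j => ((p.1 j : ℕ) : ℝ))
        (fun j _ => Nat.cast_nonneg _) (Finset.mem_univ i)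
    by_cases h : p.2 i
    · rw [JCaux.w1, if_pos h, Real.sq_sqrt (by positivity)]; linarith
    · rw [JCaux.w1, if_neg h]
      have := hNnonneg p
      nlinarith
  have hw2 : ∀ (i : Fin M) (p : JCaux.Idx M), (JCaux.w2 i p) ^ 2 ≤ Np p + 1 := by
    intro i p
    have hle : (p.1 i : ℝ) ≤ Np p :=
      Finset.single_le_sum (f := fun j => ((p.1 j : ℕ) : ℝ))
        (fun j _ => Nat.cast_nonneg _) (Finset.mem_univ i)
    by_cases h : p.2 i
    · rw [JCaux.w2, if_pos h]
      have := hNnonneg p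
      nlinarith
    · rw [JCaux.w2, if_neg h, Real.sq_sqrt (by positivity)]; linarith
  -- Step A : nrm (HI ψ) ≤ Λ * √R2
  have hA : nrm (HI M ωI ψ) ≤ Λ * Real.sqrt R2 := by
    have hHI : HI M ωI ψ = ∑ i, (ωI i : ℂ) •
        ((cre M i * sigmaMinus M i) ψ + (ann M i * sigmaPlus M i) ψ) := by
      simp [HI, LinearMap.sum_apply, LinearMap.smul_apply, LinearMap.add_apply]
    rw [hHI]
    refine (JCaux.nrm_sum_le _ _).trans ?_
    have hterm : ∀ i ∈ (Finset.univ : Finset (Fin M)),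
        nrm ((ωI i : ℂ) •
          ((cre M i * sigmaMinus M i) ψ + (ann M i * sigmaPlus M i) ψ))
          ≤ (2 * ωI i) * Real.sqrt R2 := by
      intro i _
      rw [JCaux.nrm_smul]
      have hn1 : nrm ((cre M i * sigmaMinus M i) ψ) ≤ Real.sqrt R2 := by
        rw [JCaux.nrm_t1]
        refine Real.sqrt_le_sqrt (Finset.sum_le_sum fun p _ => ?_)
        have := hw1 i p
        nlinarith [sq_nonneg ‖ψ p‖]
      have hn2 : nrm ((ann M i * sigmaPlus M i) ψ) ≤ Real.sqrt R2 := by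
        rw [JCaux.nrm_t2]
        refine Real.sqrt_le_sqrt (Finset.sum_le_sum fun p _ => ?_)
        have := hw2 i p
        nlinarith [sq_nonneg ‖ψ p‖]
      have htri := JCaux.nrm_add_le ((cre M i * sigmaMinus M i) ψ)
        ((ann M i * sigmaPlus M i) ψ)
      have hωn : ‖((ωI i : ℝ) : ℂ)‖ = ωI i := by
        rw [Complex.norm_real, Real.norm_eq_abs, abs_of_pos (hωI i)]
      rw [hωn]
      have h2 : nrm ((cre M i * sigmaMinus M i) ψ + (ann M i * sigmaPlus M i) ψ)
          ≤ 2 * Real.sqrt R2 := by linarith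
      calc ωI i * nrm ((cre M i * sigmaMinus M i) ψ + (ann M i * sigmaPlus M i) ψ)
          ≤ ωI i * (2 * Real.sqrt R2) :=
            mul_le_mul_of_nonneg_left h2 (hωI i).le
        _ = (2 * ωI i) * Real.sqrt R2 := by ring
    refine (Finset.sum_le_sum hterm).trans ?_
    rw [← Finset.sum_mul]
  -- Step B : √R2 ≤ ε √S2 + √C nrm ψ
  have hB : Real.sqrt R2 ≤ ε * Real.sqrt S2 + Real.sqrt C * nrm ψ := by
    have key : R2 ≤ ε ^ 2 * S2 + C * (∑ p ∈ ψ.support, ‖ψ p‖ ^ 2) := by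
      rw [hR2def, hS2def, Finset.mul_sum, Finset.mul_sum, ← Finset.sum_add_distrib]
      refine Finset.sum_le_sum fun p _ => ?_
      have hpt : Np p + 1 ≤ ε ^ 2 * (Np p) ^ 2 + C := by
        have h0 : 0 ≤ (ε * Np p - 1 / (2 * ε)) ^ 2 := sq_nonneg _
        have hexp : (ε * Np p - 1 / (2 * ε)) ^ 2
            = ε ^ 2 * (Np p) ^ 2 - Np p + 1 / (4 * ε ^ 2) := by
          field_simp
          ring
        rw [hexp] at h0
        rw [hCdef]
        linarith
      nlinarith [sq_nonneg ‖ψ p‖]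
    have h1 : Real.sqrt R2
        ≤ Real.sqrt (ε ^ 2 * S2 + C * (∑ p ∈ ψ.support, ‖ψ p‖ ^ 2)) :=
      Real.sqrt_le_sqrt key
    refine h1.trans ?_
    refine (JCaux.sqrt_add_le' _ _ (by positivity) (by positivity)).trans ?_
    rw [Real.sqrt_mul (by positivity) S2, Real.sqrt_mul hCpos.le, Real.sqrt_sq hεpos.le,
      hnψ]
  -- Step C : μ √S2 ≤ nrm (HP ψ)
  have hC2 : μ * Real.sqrt S2 ≤ nrm (HP M ωP ψ) := by
    rw [JCaux.nrm_HP]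
    have heq : μ * Real.sqrt S2 = Real.sqrt (μ ^ 2 * S2) := by
      rw [Real.sqrt_mul (by positivity), Real.sqrt_sq hμpos.le]
    rw [heq]
    refine Real.sqrt_le_sqrt ?_
    rw [Finset.mul_sum]
    refine Finset.sum_le_sum fun p _ => ?_
    have hE : μ * Np p ≤ JCaux.EP ωP p := by
      rw [hNpdef, JCaux.EP, Finset.mul_sum]
      exact Finset.sum_le_sum fun i _ =>
        mul_le_mul_of_nonneg_right (hμle i) (Nat.cast_nonneg _)
    have hEnn : 0 ≤ μ * Np p := by positivity
    have hsq : μ ^ 2 * (Np p) ^ 2 ≤ (JCaux.EP ωP p) ^ 2 := by nlinarith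
    nlinarith [sq_nonneg ‖ψ p‖]
  -- combine
  have hΛε : Λ * ε = b * μ := by
    rw [hεdef]; field_simp
  calc nrm (HI M ωI ψ) ≤ Λ * Real.sqrt R2 := hA
    _ ≤ Λ * (ε * Real.sqrt S2 + Real.sqrt C * nrm ψ) :=
        mul_le_mul_of_nonneg_left hB hΛpos.le
    _ = (Λ * ε) * Real.sqrt S2 + (Λ * Real.sqrt C) * nrm ψ := by ring
    _ = b * (μ * Real.sqrt S2) + (Λ * Real.sqrt C) * nrm ψ := by rw [hΛε]; ring
    _ ≤ b * nrm (HP M ωP ψ) + (Λ * Real.sqrt C) * nrm ψ := by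
        have := mul_le_mul_of_nonneg_left hC2 hb0.le
        linarith

end
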